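/- arXiv:1509.01595 — 2 statements merged into one kernel-verified Lean document; each statement's English description precedes it below -/
import Mathlib

section
/- For the set M = {u, r_α(u), r_{−α}(u), r_β(u), r_{−β}(u), r_α(u)−r_β(u), r_{−α}(u)−r_{−β}(u)} with α = arccos(1/(2√3)) − π/6, β = α + π/3, the vector graph V_M (vertices = ℤ-span of M, x ~ y iff x − y ∈ M or y − x ∈ M) satisfies χ(V_M) ≤ 4. -/
noncomputable def rot (θ : ℝ) (u : ℂ) : ℂ := Complex.exp (θ * Complex.I) * u
noncomputable def angA : ℝ := Real.arccos (1 / (2 * Real.sqrt 3)) - Real.pi / 6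
noncomputable def angB : ℝ := angA + Real.pi / 3

noncomputable def Mset (u : ℂ) : Set ℂ :=
  {u, rot angA u, rot (-angA) u, rot angB u, rot (-angB) u,
   rot angA u - rot angB u, rot (-angA) u - rot (-angB) u}

noncomputable def VM (u : ℂ) : SimpleGraph (Submodule.span ℤ (Mset u)) :=
  SimpleGraph.fromRel (fun x y => (x : ℂ) - (y : ℂ) ∈ Mset u)

-- trig section (already verified)
lemma sqrt33_irr : Irrational (Real.sqrt 33) := by
  refine irrational_sqrt_ofNat_iff.mpr ?_
  rintro ⟨r, hr⟩
  have h5 : r < 6 := by nlinarith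
  interval_cases r <;> omega

lemma s3 : Real.sqrt 3 * Real.sqrt 3 = 3 := Real.mul_self_sqrt (by norm_num)

lemma one_lt_s3 : 1 < Real.sqrt 3 := by nlinarith [s3, Real.sqrt_nonneg 3]

lemma cos_phi : Real.cos (Real.arccos (1 / (2 * Real.sqrt 3))) = 1 / (2 * Real.sqrt 3) := by
  apply Real.cos_arccos
  · exact le_trans (by norm_num : (-1:ℝ) ≤ 0) (by positivity)
  · rw [div_le_one (by positivity)]; linarith [one_lt_s3]

lemma sin_phi : Real.sin (Real.arccos (1 / (2 * Real.sqrt 3))) = Real.sqrt 33 / 6 := by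
  rw [Real.sin_arccos]
  have h3 : Real.sqrt 3 > 0 := by linarith [one_lt_s3]
  have h1 : (1:ℝ) - (1 / (2 * Real.sqrt 3))^2 = 11/12 := by
    field_simp
    nlinarith [s3]
  have h2 : (11:ℝ)/12 = (Real.sqrt 33/6)^2 := by
    rw [div_pow, Real.sq_sqrt (by norm_num : (33:ℝ) ≥ 0)]; norm_num
  rw [h1, h2, Real.sqrt_sq (by positivity)]

lemma cosA_add_cosB : Real.cos angA + Real.cos angB = 1/2 := by
  have h3 : Real.sqrt 3 > 0 := by linarith [one_lt_s3]
  rw [Real.cos_add_cos]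
  have h1 : (angA + angB)/2 = Real.arccos (1 / (2 * Real.sqrt 3)) := by
    unfold angB angA; ring
  have h2 : (angA - angB)/2 = -(Real.pi/6) := by unfold angB; ring
  rw [h1, h2, cos_phi, Real.cos_neg, Real.cos_pi_div_six]
  field_simp

lemma cosA : Real.cos angA = (3 + Real.sqrt 33)/12 := by
  have h3 : Real.sqrt 3 > 0 := by linarith [one_lt_s3]
  have : angA = Real.arccos (1 / (2 * Real.sqrt 3)) - Real.pi/6 := rfl
  rw [this, Real.cos_sub, cos_phi, sin_phi, Real.cos_pi_div_six, Real.sin_pi_div_six]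
  field_simp
  nlinarith [s3]

lemma cosB : Real.cos angB = (3 - Real.sqrt 33)/12 := by
  have := cosA_add_cosB
  rw [cosA] at this; linarith

lemma s33 : Real.sqrt 3 * Real.sqrt 11 = Real.sqrt 33 := by
  rw [← Real.sqrt_mul (by norm_num)]; norm_num

lemma sinA : Real.sin angA = (3 * Real.sqrt 11 - Real.sqrt 3)/12 := by
  have h3 : Real.sqrt 3 > 0 := by linarith [one_lt_s3]
  have : angA = Real.arccos (1 / (2 * Real.sqrt 3)) - Real.pi/6 := rfl
  rw [this, Real.sin_sub, cos_phi, sin_phi, Real.cos_pi_div_six, Real.sin_pi_div_six]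
  have hm : Real.sqrt 33 * Real.sqrt 3 = 3 * Real.sqrt 11 := by
    rw [← s33]; linear_combination Real.sqrt 11 * s3
  field_simp
  nlinarith [s3, hm]

lemma sinB : Real.sin angB = (3 * Real.sqrt 11 + Real.sqrt 3)/12 := by
  have h3 : Real.sqrt 3 > 0 := by linarith [one_lt_s3]
  have hb : angB = Real.arccos (1 / (2 * Real.sqrt 3)) + Real.pi/6 := by
    unfold angB angA; ring
  rw [hb, Real.sin_add, cos_phi, sin_phi, Real.cos_pi_div_six, Real.sin_pi_div_six]
  have hm : Real.sqrt 33 * Real.sqrt 3 = 3 * Real.sqrt 11 := by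
    rw [← s33]; linear_combination Real.sqrt 11 * s3
  field_simp
  nlinarith [s3, hm]

-- key integer lemma
lemma key33 {k m : ℤ} (h : (k:ℝ) * Real.sqrt 33 = m) : k = 0 ∧ m = 0 := by
  by_cases hk : k = 0
  · subst hk; simp at h; constructor; rfl; exact_mod_cast h.symm
  · exfalso
    apply sqrt33_irr
    refine ⟨(m : ℚ) / (k : ℚ), ?_⟩
    have hk' : (k:ℝ) ≠ 0 := Int.cast_ne_zero.mpr hk
    push_cast
    field_simp
    linarith [h]

-- the four generating vectors
noncomputable def vv (u : ℂ) : Fin 4 → ℂ :=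
  ![rot angA u, rot (-angA) u, rot angB u, rot (-angB) u]

lemma rel_u (u : ℂ) : vv u 0 + vv u 1 + vv u 2 + vv u 3 = u := by
  have hre : ∀ θ : ℝ, (Complex.exp ((θ:ℂ) * Complex.I)).re = Real.cos θ :=
    Complex.exp_ofReal_mul_I_re
  have him : ∀ θ : ℝ, (Complex.exp ((θ:ℂ) * Complex.I)).im = Real.sin θ :=
    Complex.exp_ofReal_mul_I_im
  have key : (Complex.exp ((angA:ℂ) * Complex.I) + Complex.exp (((-angA : ℝ):ℂ) * Complex.I)
      + Complex.exp ((angB:ℂ) * Complex.I) + Complex.exp (((-angB : ℝ):ℂ) * Complex.I)) = 1 := by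
    apply Complex.ext
    · simp only [Complex.add_re, hre, Complex.one_re, Real.cos_neg]
      linarith [cosA_add_cosB]
    · simp only [Complex.add_im, him, Complex.one_im, Real.sin_neg]
      ring
  show rot angA u + rot (-angA) u + rot angB u + rot (-angB) u = u
  unfold rot
  calc Complex.exp ((angA:ℂ) * Complex.I) * u + Complex.exp (((-angA : ℝ):ℂ) * Complex.I) * u
      + Complex.exp ((angB:ℂ) * Complex.I) * u + Complex.exp (((-angB : ℝ):ℂ) * Complex.I) * u
      = (Complex.exp ((angA:ℂ) * Complex.I) + Complex.exp (((-angA : ℝ):ℂ) * Complex.I)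
      + Complex.exp ((angB:ℂ) * Complex.I) + Complex.exp (((-angB : ℝ):ℂ) * Complex.I)) * u := by
        ring
    _ = u := by rw [key, one_mul]

lemma vv_indep (u : ℂ) (hu : u ≠ 0) : LinearIndependent ℤ (vv u) := by
  rw [Fintype.linearIndependent_iff]
  intro g hg
  have hsum : ((g 0 : ℂ) * Complex.exp ((angA:ℂ) * Complex.I)
      + (g 1 : ℂ) * Complex.exp (((-angA : ℝ):ℂ) * Complex.I)
      + (g 2 : ℂ) * Complex.exp ((angB:ℂ) * Complex.I)
      + (g 3 : ℂ) * Complex.exp (((-angB : ℝ):ℂ) * Complex.I)) * u = 0 := by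
    rw [← hg, Fin.sum_univ_four]
    show _ = g 0 • (Complex.exp ((angA:ℂ) * Complex.I) * u)
      + g 1 • (Complex.exp (((-angA : ℝ):ℂ) * Complex.I) * u)
      + g 2 • (Complex.exp ((angB:ℂ) * Complex.I) * u)
      + g 3 • (Complex.exp (((-angB : ℝ):ℂ) * Complex.I) * u)
    simp only [zsmul_eq_mul]
    ring
  have hz : ((g 0 : ℂ) * Complex.exp ((angA:ℂ) * Complex.I)
      + (g 1 : ℂ) * Complex.exp (((-angA : ℝ):ℂ) * Complex.I)
      + (g 2 : ℂ) * Complex.exp ((angB:ℂ) * Complex.I)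
      + (g 3 : ℂ) * Complex.exp (((-angB : ℝ):ℂ) * Complex.I)) = 0 :=
    (mul_eq_zero.mp hsum).resolve_right hu
  have e1 := congrArg Complex.re hz
  have e2 := congrArg Complex.im hz
  have hre : ∀ θ : ℝ, (Complex.exp ((θ:ℂ) * Complex.I)).re = Real.cos θ :=
    Complex.exp_ofReal_mul_I_re
  have him : ∀ θ : ℝ, (Complex.exp ((θ:ℂ) * Complex.I)).im = Real.sin θ :=
    Complex.exp_ofReal_mul_I_im
  simp only [Complex.add_re, Complex.add_im, Complex.mul_re, Complex.mul_im,
    Complex.intCast_re, Complex.intCast_im, Complex.zero_re, Complex.zero_im,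
    hre, him, Real.cos_neg, Real.sin_neg, cosA, cosB, sinA, sinB] at e1 e2
  have k1 : ((g 0 + g 1 - g 2 - g 3 : ℤ) : ℝ) * Real.sqrt 33
      = ((-3 * (g 0 + g 1 + g 2 + g 3) : ℤ) : ℝ) := by
    push_cast
    linear_combination 12 * e1
  have k2 : ((g 0 - g 1 + g 2 - g 3 : ℤ) : ℝ) * Real.sqrt 33
      = ((g 0 - g 1 - g 2 + g 3 : ℤ) : ℝ) := by
    push_cast
    linear_combination (4 * Real.sqrt 3) * e2
      - ((g 0 : ℝ) - g 1 + g 2 - g 3) * s33 + (((g 0 : ℝ) - g 1 - g 2 + g 3)/3) * s3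
  obtain ⟨p1, p2⟩ := key33 k1
  obtain ⟨q1, q2⟩ := key33 k2
  have h0 : g 0 = 0 := by omega
  have h1 : g 1 = 0 := by omega
  have h2 : g 2 = 0 := by omega
  have h3 : g 3 = 0 := by omega
  intro i
  fin_cases i
  exacts [h0, h1, h2, h3]

lemma span_eq (u : ℂ) : Submodule.span ℤ (Mset u) = Submodule.span ℤ (Set.range (vv u)) := by
  apply le_antisymm
  · rw [Submodule.span_le]
    intro x hx
    have hv : ∀ i, vv u i ∈ Submodule.span ℤ (Set.range (vv u)) :=
      fun i => Submodule.subset_span ⟨i, rfl⟩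
    have hu' : u ∈ Submodule.span ℤ (Set.range (vv u)) := by
      have := add_mem (add_mem (add_mem (hv 0) (hv 1)) (hv 2)) (hv 3)
      rwa [rel_u u] at this
    simp only [Mset, Set.mem_insert_iff, Set.mem_singleton_iff] at hx
    rcases hx with h | h | h | h | h | h | h <;> rw [h]
    · exact hu'
    · exact hv 0
    · exact hv 1
    · exact hv 2
    · exact hv 3
    · exact sub_mem (hv 0) (hv 2)
    · exact sub_mem (hv 1) (hv 3)
  · rw [Submodule.span_le]
    rintro x ⟨i, rfl⟩
    apply Submodule.subset_span
    fin_cases i <;> simp [Mset, vv]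

noncomputable def Bb (u : ℂ) (hu : u ≠ 0) :
    Module.Basis (Fin 4) ℤ (Submodule.span ℤ (Set.range (vv u))) :=
  Module.Basis.span (vv_indep u hu)

noncomputable def Ff (u : ℂ) (hu : u ≠ 0) :
    Submodule.span ℤ (Set.range (vv u)) →ₗ[ℤ] ZMod 4 :=
  (Bb u hu).constr ℕ ![1, 3, 2, 1]

lemma Bb_apply (u : ℂ) (hu : u ≠ 0) (i : Fin 4)
    (h : vv u i ∈ Submodule.span ℤ (Set.range (vv u))) :
    (⟨vv u i, h⟩ : Submodule.span ℤ (Set.range (vv u))) = Bb u hu i :=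
  (Module.Basis.span_apply (vv_indep u hu) i).symm

lemma Bb_coe (u : ℂ) (hu : u ≠ 0) (i : Fin 4) : ((Bb u hu i : Submodule.span ℤ (Set.range (vv u))) : ℂ) = vv u i :=
  congrArg Subtype.val (Module.Basis.span_apply (vv_indep u hu) i)

lemma Ff_B (u : ℂ) (hu : u ≠ 0) (i : Fin 4) :
    Ff u hu (Bb u hu i) = ![1, 3, 2, 1] i :=
  Module.Basis.constr_basis (Bb u hu) ℕ ![1, 3, 2, 1] i

lemma Ff_v (u : ℂ) (hu : u ≠ 0) (i : Fin 4)
    (h : vv u i ∈ Submodule.span ℤ (Set.range (vv u))) :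
    Ff u hu ⟨vv u i, h⟩ = ![1, 3, 2, 1] i := by
  rw [Bb_apply u hu i h]; exact Ff_B u hu i

lemma Ff_congr (u : ℂ) (hu : u ≠ 0) (x z : ℂ) (hxz : x = z)
    (hx : x ∈ Submodule.span ℤ (Set.range (vv u)))
    (hz : z ∈ Submodule.span ℤ (Set.range (vv u))) :
    Ff u hu ⟨x, hx⟩ = Ff u hu ⟨z, hz⟩ := by subst hxz; rfl

lemma Ff_M (u : ℂ) (hu : u ≠ 0) (z : ℂ) (hzM : z ∈ Mset u)
    (hz : z ∈ Submodule.span ℤ (Set.range (vv u))) :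
    Ff u hu ⟨z, hz⟩ ≠ 0 := by
  have hv : ∀ i, vv u i ∈ Submodule.span ℤ (Set.range (vv u)) :=
    fun i => Submodule.subset_span ⟨i, rfl⟩
  have huS : u ∈ Submodule.span ℤ (Set.range (vv u)) := by
    have := add_mem (add_mem (add_mem (hv 0) (hv 1)) (hv 2)) (hv 3)
    rwa [rel_u u] at this
  simp only [Mset, Set.mem_insert_iff, Set.mem_singleton_iff] at hzM
  rcases hzM with h | h | h | h | h | h | h
  · rw [Ff_congr u hu z u h hz huS]
    have hb : (⟨u, huS⟩ : Submodule.span ℤ (Set.range (vv u)))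
        = Bb u hu 0 + Bb u hu 1 + Bb u hu 2 + Bb u hu 3 := by
      apply Subtype.ext
      push_cast
      rw [Bb_coe, Bb_coe, Bb_coe, Bb_coe]
      exact (rel_u u).symm
    rw [hb, map_add, map_add, map_add, Ff_B, Ff_B, Ff_B, Ff_B]
    decide
  · rw [Ff_congr u hu z (vv u 0) h hz (hv 0), Ff_v]; decide
  · rw [Ff_congr u hu z (vv u 1) h hz (hv 1), Ff_v]; decide
  · rw [Ff_congr u hu z (vv u 2) h hz (hv 2), Ff_v]; decide
  · rw [Ff_congr u hu z (vv u 3) h hz (hv 3), Ff_v]; decide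
  · rw [Ff_congr u hu z (vv u 0 - vv u 2) h hz (sub_mem (hv 0) (hv 2))]
    have hb : (⟨vv u 0 - vv u 2, sub_mem (hv 0) (hv 2)⟩ : Submodule.span ℤ (Set.range (vv u)))
        = Bb u hu 0 - Bb u hu 2 := by
      apply Subtype.ext
      push_cast
      rw [Bb_coe, Bb_coe]
    rw [hb, map_sub, Ff_B, Ff_B]
    decide
  · rw [Ff_congr u hu z (vv u 1 - vv u 3) h hz (sub_mem (hv 1) (hv 3))]
    have hb : (⟨vv u 1 - vv u 3, sub_mem (hv 1) (hv 3)⟩ : Submodule.span ℤ (Set.range (vv u)))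
        = Bb u hu 1 - Bb u hu 3 := by
      apply Subtype.ext
      push_cast
      rw [Bb_coe, Bb_coe]
    rw [hb, map_sub, Ff_B, Ff_B]
    decide

theorem stmt10 (u : ℂ) (hu : ‖u‖ = 1) : (VM u).chromaticNumber ≤ 4 := by
  have hu0 : u ≠ 0 := by intro h; rw [h] at hu; simp at hu
  have heq := span_eq u
  have hmem : ∀ x, x ∈ Submodule.span ℤ (Mset u)
      → x ∈ Submodule.span ℤ (Set.range (vv u)) := fun x hx => heq ▸ hx
  let c : (Submodule.span ℤ (Mset u)) → ZMod 4 := fun x => Ff u hu0 ⟨x.1, hmem x.1 x.2⟩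
  have hprop : ∀ {x y}, (VM u).Adj x y → c x ≠ c y := by
    have hsub : ∀ a b : Submodule.span ℤ (Mset u),
        (a:ℂ) - b ∈ Mset u → c a ≠ c b := by
      intro a b hab hcc
      have hdS : (a:ℂ) - b ∈ Submodule.span ℤ (Set.range (vv u)) :=
        sub_mem (hmem _ a.2) (hmem _ b.2)
      have hz : Ff u hu0 ⟨(a:ℂ) - b, hdS⟩ = 0 := by
        have hsplit : (⟨(a:ℂ) - b, hdS⟩ : Submodule.span ℤ (Set.range (vv u)))
            = (⟨(a:ℂ), hmem _ a.2⟩ : Submodule.span ℤ (Set.range (vv u)))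
              - ⟨(b:ℂ), hmem _ b.2⟩ := rfl
        rw [hsplit, map_sub, sub_eq_zero]
        exact hcc
      exact Ff_M u hu0 _ hab hdS hz
    intro x y hxy
    rw [VM, SimpleGraph.fromRel_adj] at hxy
    obtain ⟨hne, hc⟩ := hxy
    rcases hc with hcase | hcase
    · exact hsub x y hcase
    · exact (hsub y x hcase).symm
  let C : (VM u).Coloring (ZMod 4) := SimpleGraph.Coloring.mk c (fun hxy => hprop hxy)
  have h4 : Fintype.card (ZMod 4) = 4 := rfl
  have := C.colorable.chromaticNumber_le
  rw [h4] at this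
  exact_mod_cast this
end

section
/- Every edge of the vector graph V_M joins two points at Euclidean distance exactly 1; i.e., V_M is a unit-distance graph in the plane. -/
lemma norm_rot (θ : ℝ) (u : ℂ) : ‖rot θ u‖ = ‖u‖ := by
  simp [rot, map_mul, Complex.norm_exp_ofReal_mul_I]

lemma norm_one_sub_exp : ‖(1 : ℂ) - Complex.exp ((Real.pi / 3 : ℝ) * Complex.I)‖ = 1 := by
  rw [Complex.exp_mul_I]
  have hc : Complex.cos ((Real.pi / 3 : ℝ)) = (1/2 : ℝ) := by
    rw [← Complex.ofReal_cos, Real.cos_pi_div_three]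
  have hs : Complex.sin ((Real.pi / 3 : ℝ)) = ((Real.sqrt 3 / 2 : ℝ)) := by
    rw [← Complex.ofReal_sin, Real.sin_pi_div_three]
  rw [hc, hs]
  have : (1 : ℂ) - ((1/2 : ℝ) + (Real.sqrt 3 / 2 : ℝ) * Complex.I)
      = Complex.mk (1/2) (-(Real.sqrt 3 / 2)) := by
    apply Complex.ext <;> simp <;> norm_num
  rw [this]
  rw [Complex.norm_def, Complex.normSq_mk]
  have h3 : Real.sqrt 3 ^ 2 = 3 := Real.sq_sqrt (by norm_num)
  rw [show (1/2 : ℝ) * (1/2) + -(Real.sqrt 3 / 2) * -(Real.sqrt 3 / 2) = 1 by nlinarith]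
  simp

lemma norm_diff (θ : ℝ) (u : ℂ) (hu : ‖u‖ = 1) :
    ‖rot θ u - rot (θ + Real.pi / 3) u‖ = 1 := by
  have : rot θ u - rot (θ + Real.pi / 3) u
      = Complex.exp (θ * Complex.I) * ((1 : ℂ) - Complex.exp ((Real.pi/3 : ℝ) * Complex.I)) * u := by
    simp only [rot]
    rw [Complex.ofReal_add, add_mul, Complex.exp_add]
    ring
  rw [this, norm_mul, norm_mul, hu, Complex.norm_exp_ofReal_mul_I,
    norm_one_sub_exp]; ring


lemma mem_norm (u : ℂ) (hu : ‖u‖ = 1) (v : ℂ) (hv : v ∈ Mset u) : ‖v‖ = 1 := by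
  rcases hv with rfl | rfl | rfl | rfl | rfl | rfl | rfl
  · exact hu
  · rw [norm_rot]; exact hu
  · rw [norm_rot]; exact hu
  · rw [norm_rot]; exact hu
  · rw [norm_rot]; exact hu
  · have := norm_diff angA u hu
    rwa [show angA + Real.pi / 3 = angB from rfl] at this
  · have := norm_diff (-angB) u hu
    rw [show -angB + Real.pi / 3 = -angA by simp [angB]] at this
    rwa [norm_sub_rev] at this

theorem stmt13 (u : ℂ) (hu : ‖u‖ = 1) (x y : Submodule.span ℤ (Mset u))
    (h : (VM u).Adj x y) : ‖(x : ℂ) - (y : ℂ)‖ = 1 := by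
  rcases h with ⟨hne, hm | hm⟩
  · exact mem_norm u hu _ hm
  · rw [← norm_neg, neg_sub]; exact mem_norm u hu _ hm
end
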